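/- Let A be a commutative integral domain with quotient field K and suppose K* stabilizes G = [[G₁₁,G₁₂],[G₂₁,G₂₂]]. With V* = K*(I - G₂₂K*)⁻¹ and any Q of the form Q = L̃ Λ L with Λ a matrix over A, where L̃ = [(I-K*G₂₂)⁻¹, -(I-K*G₂₂)⁻¹K*] and L = [-K*(I-G₂₂K*)⁻¹; (I-G₂₂K*)⁻¹], the matrix [G₁₂; I; G₂₂] Q [G₂₁, G₂₂, I] has all entries in A. -/

import Mathlib

open Matrix

/-- A matrix over the fraction field of `R` is *stable* if all its entries lie in
the image of `R`. -/
def stableMat (R : Type*) [CommRing R] {a b : Type*}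
    (M : Matrix a b (FractionRing R)) : Prop :=
  ∀ i j, M i j ∈ Set.range (algebraMap R (FractionRing R))

section aux

variable {R : Type*} [CommRing R] {a b c : Type*}

lemma stableMat_iff (M : Matrix a b (FractionRing R)) :
    stableMat R M ↔ ∀ i j, M i j ∈ (algebraMap R (FractionRing R)).range := by
  simp [stableMat, RingHom.mem_range, Set.mem_range]

lemma stable_one [DecidableEq a] : stableMat R (1 : Matrix a a (FractionRing R)) := by
  rw [stableMat_iff]
  intro i j
  by_cases h : i = j
  · simp only [Matrix.one_apply, h, if_true]
    exact ⟨1, map_one _⟩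
  · simp only [Matrix.one_apply, h, if_false]
    exact ⟨0, map_zero _⟩

lemma stable_neg {M : Matrix a b (FractionRing R)} (hM : stableMat R M) :
    stableMat R (-M) := by
  rw [stableMat_iff] at *
  intro i j
  simpa using neg_mem (hM i j)

lemma stable_sub {M N : Matrix a b (FractionRing R)} (hM : stableMat R M)
    (hN : stableMat R N) : stableMat R (M - N) := by
  rw [stableMat_iff] at *
  intro i j
  simpa [Matrix.sub_apply] using sub_mem (hM i j) (hN i j)

lemma stable_mul [Fintype b] {M : Matrix a b (FractionRing R)}
    {N : Matrix b c (FractionRing R)} (hM : stableMat R M) (hN : stableMat R N) :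
    stableMat R (M * N) := by
  rw [stableMat_iff] at *
  intro i j
  rw [Matrix.mul_apply]
  exact Subring.sum_mem _ fun k _ => mul_mem (hM i k) (hN k j)

lemma stable_fromColumns {M : Matrix a b (FractionRing R)}
    {N : Matrix a c (FractionRing R)} (hM : stableMat R M) (hN : stableMat R N) :
    stableMat R (Matrix.fromCols M N) := by
  intro i j
  cases j with
  | inl j => simpa [Matrix.fromCols, Matrix.fromCols_apply_inl] using hM i j
  | inr j => simpa [Matrix.fromCols, Matrix.fromCols_apply_inr] using hN i j

lemma stable_fromRows {M : Matrix a c (FractionRing R)}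
    {N : Matrix b c (FractionRing R)} (hM : stableMat R M) (hN : stableMat R N) :
    stableMat R (Matrix.fromRows M N) := by
  intro i j
  cases i with
  | inl i => simpa [Matrix.fromRows_apply_inl] using hM i j
  | inr i => simpa [Matrix.fromRows_apply_inr] using hN i j

lemma stable_sandwich {R : Type*} [CommRing R] {m p q : Type*} [Fintype m]
    {Λ : Matrix m m (FractionRing R)} (hΛ : stableMat R Λ)
    (X : Matrix p m (FractionRing R)) (Y : Matrix m q (FractionRing R))
    (hX : stableMat R X) (hY : stableMat R Y) : stableMat R (X * Λ * Y) :=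
  stable_mul (stable_mul hX hΛ) hY

end aux

/-- All nine block entries of the closed-loop transfer matrix `Θ(G,K)` are
stable, where `U = (I - G₂₂ K)⁻¹` and `V = K U`. -/
def ThetaStable (R : Type*) [CommRing R] [IsDomain R]
    {nW nZ nY nU : Type*} [Fintype nY] [Fintype nU] [DecidableEq nY] [DecidableEq nU]
    (G₁₁ : Matrix nZ nW (FractionRing R)) (G₁₂ : Matrix nZ nU (FractionRing R))
    (G₂₁ : Matrix nY nW (FractionRing R)) (G₂₂ : Matrix nY nU (FractionRing R))
    (K : Matrix nU nY (FractionRing R)) : Prop :=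
  stableMat R (G₁₁ + G₁₂ * (K * (1 - G₂₂ * K)⁻¹) * G₂₁) ∧
  stableMat R (G₁₂ + G₁₂ * (K * (1 - G₂₂ * K)⁻¹) * G₂₂) ∧
  stableMat R (G₁₂ * (K * (1 - G₂₂ * K)⁻¹)) ∧
  stableMat R ((K * (1 - G₂₂ * K)⁻¹) * G₂₁) ∧
  stableMat R (1 + (K * (1 - G₂₂ * K)⁻¹) * G₂₂) ∧
  stableMat R (K * (1 - G₂₂ * K)⁻¹) ∧
  stableMat R ((1 - G₂₂ * K)⁻¹ * G₂₁) ∧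
  stableMat R ((1 - G₂₂ * K)⁻¹ * G₂₂) ∧
  stableMat R ((1 - G₂₂ * K)⁻¹)

/-- Free parametrization of the admissible set `Ω`: if `K*` stabilizes `G` and
`Q = L̃ Λ L` with `Λ` stable, then all nine entries of
`[G₁₂; I; G₂₂] Q [G₂₁, G₂₂, I]` are stable. -/
theorem free_param_admissible_set {R : Type*} [CommRing R] [IsDomain R]
    {nW nZ nY nU : Type*} [Fintype nY] [Fintype nU] [DecidableEq nY] [DecidableEq nU]
    (G₁₁ : Matrix nZ nW (FractionRing R)) (G₁₂ : Matrix nZ nU (FractionRing R))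
    (G₂₁ : Matrix nY nW (FractionRing R)) (G₂₂ : Matrix nY nU (FractionRing R))
    (Ks : Matrix nU nY (FractionRing R))
    (hdets : (1 - G₂₂ * Ks).det ≠ 0)
    (hstab : ThetaStable R G₁₁ G₁₂ G₂₁ G₂₂ Ks)
    (Λ : Matrix (nU ⊕ nY) (nU ⊕ nY) (FractionRing R))
    (hΛ : stableMat R Λ)
    (Q : Matrix nU nY (FractionRing R))
    (hQ : Q = (Matrix.fromCols ((1 - Ks * G₂₂)⁻¹)
          (-((1 - Ks * G₂₂)⁻¹ * Ks))) * Λ *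
        (Matrix.fromRows (-(Ks * (1 - G₂₂ * Ks)⁻¹)) ((1 - G₂₂ * Ks)⁻¹))) :
    stableMat R (G₁₂ * Q * G₂₁) ∧ stableMat R (G₁₂ * Q * G₂₂) ∧
      stableMat R (G₁₂ * Q) ∧ stableMat R (Q * G₂₁) ∧ stableMat R (Q * G₂₂) ∧
      stableMat R Q ∧ stableMat R (G₂₂ * Q * G₂₁) ∧
      stableMat R (G₂₂ * Q * G₂₂) ∧ stableMat R (G₂₂ * Q) := by
  set U := (1 - G₂₂ * Ks)⁻¹ with hU
  set U' := (1 - Ks * G₂₂)⁻¹ with hU'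
  obtain ⟨-, h2, h3, h4, h5, h6, h7, h8, h9⟩ := hstab
  -- invertibility facts
  have hdets' : (1 - Ks * G₂₂).det ≠ 0 := by
    rwa [Matrix.det_one_sub_mul_comm]
  have hUl : (1 - G₂₂ * Ks) * U = 1 := Matrix.mul_nonsing_inv _ (isUnit_iff_ne_zero.mpr hdets)
  have hUr : U * (1 - G₂₂ * Ks) = 1 := Matrix.nonsing_inv_mul _ (isUnit_iff_ne_zero.mpr hdets)
  have hU'l : (1 - Ks * G₂₂) * U' = 1 := Matrix.mul_nonsing_inv _ (isUnit_iff_ne_zero.mpr hdets')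
  have hU'r : U' * (1 - Ks * G₂₂) = 1 := Matrix.nonsing_inv_mul _ (isUnit_iff_ne_zero.mpr hdets')
  -- push-through identities
  have hPush : U' * Ks = Ks * U := by
    have h1 : Ks * (1 - G₂₂ * Ks) = (1 - Ks * G₂₂) * Ks := by
      rw [Matrix.mul_sub, Matrix.sub_mul, Matrix.mul_one, Matrix.one_mul, Matrix.mul_assoc]
    calc U' * Ks = U' * Ks * ((1 - G₂₂ * Ks) * U) := by rw [hUl, Matrix.mul_one]
      _ = U' * (Ks * (1 - G₂₂ * Ks)) * U := by simp only [Matrix.mul_assoc]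
      _ = U' * (1 - Ks * G₂₂) * (Ks * U) := by rw [h1]; simp only [Matrix.mul_assoc]
      _ = Ks * U := by rw [hU'r, Matrix.one_mul]
  have hU'eq : U' = 1 + Ks * U * G₂₂ := by
    have h1 : U' * (1 - Ks * G₂₂) + U' * (Ks * G₂₂) = U' := by
      rw [Matrix.mul_sub, Matrix.mul_one]; abel
    rw [hU'r] at h1
    calc U' = 1 + U' * (Ks * G₂₂) := h1.symm
      _ = 1 + Ks * U * G₂₂ := by rw [← Matrix.mul_assoc, hPush]
  have hG22U' : G₂₂ * U' = U * G₂₂ := by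
    have h1 : G₂₂ * (1 - Ks * G₂₂) = (1 - G₂₂ * Ks) * G₂₂ := by
      rw [Matrix.mul_sub, Matrix.sub_mul, Matrix.mul_one, Matrix.one_mul, Matrix.mul_assoc]
    calc G₂₂ * U' = (U * (1 - G₂₂ * Ks)) * (G₂₂ * U') := by rw [hUr, Matrix.one_mul]
      _ = U * ((1 - G₂₂ * Ks) * G₂₂) * U' := by simp only [Matrix.mul_assoc]
      _ = U * (G₂₂ * (1 - Ks * G₂₂)) * U' := by rw [h1]
      _ = U * G₂₂ * ((1 - Ks * G₂₂) * U') := by simp only [Matrix.mul_assoc]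
      _ = U * G₂₂ := by rw [hU'l, Matrix.mul_one]
  have hG22V : G₂₂ * (Ks * U) = U - 1 := by
    have h1 : U - G₂₂ * (Ks * U) = 1 := by
      rw [← Matrix.mul_assoc]
      have h2' : (1 - G₂₂ * Ks) * U = 1 * U - G₂₂ * Ks * U := Matrix.sub_mul _ _ _
      rw [Matrix.one_mul] at h2'
      rw [← h2', hUl]
    have h3' : U = 1 + G₂₂ * (Ks * U) := sub_eq_iff_eq_add.mp h1
    have h4' : G₂₂ * (Ks * U) + 1 = U := by rw [add_comm]; exact h3'.symm
    exact eq_sub_of_add_eq h4'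
  -- stability of the needed blocks
  have sA : stableMat R (G₁₂ * U') := by
    have e : G₁₂ * U' = G₁₂ + G₁₂ * (Ks * U) * G₂₂ := by
      rw [hU'eq, Matrix.mul_add, Matrix.mul_one, ← Matrix.mul_assoc]
    rw [e]; exact h2
  have sB : stableMat R (G₁₂ * (U' * Ks)) := by rw [hPush]; exact h3
  have sC : stableMat R U' := by rw [hU'eq]; exact h5
  have sD : stableMat R (U' * Ks) := by rw [hPush]; exact h6
  have sE : stableMat R (G₂₂ * U') := by rw [hG22U']; exact h8
  have sF : stableMat R (G₂₂ * (U' * Ks)) := by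
    rw [hPush, hG22V]; exact stable_sub h9 stable_one
  have sVG22 : stableMat R (Ks * U * G₂₂) := by
    have e : Ks * U * G₂₂ = (1 + Ks * U * G₂₂) - 1 := by abel
    rw [e]; exact stable_sub h5 stable_one
  -- the three left factors and three right factors
  set Lt := Matrix.fromCols U' (-(U' * Ks)) with hLt
  set L := Matrix.fromRows (-(Ks * U)) U with hL
  have sLt : stableMat R Lt := stable_fromColumns sC (stable_neg sD)
  have sL : stableMat R L := stable_fromRows (stable_neg h6) h9
  have sG12Lt : stableMat R (G₁₂ * Lt) := by
    rw [hLt, Matrix.mul_fromCols, Matrix.mul_neg]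
    exact stable_fromColumns sA (stable_neg sB)
  have sG22Lt : stableMat R (G₂₂ * Lt) := by
    rw [hLt, Matrix.mul_fromCols, Matrix.mul_neg]
    exact stable_fromColumns sE (stable_neg sF)
  have sLG21 : stableMat R (L * G₂₁) := by
    rw [hL, Matrix.fromRows_mul, Matrix.neg_mul]
    exact stable_fromRows (stable_neg h4) h7
  have sLG22 : stableMat R (L * G₂₂) := by
    rw [hL, Matrix.fromRows_mul, Matrix.neg_mul]
    exact stable_fromRows (stable_neg sVG22) h8
  have hQ' : Q = Lt * Λ * L := hQ
  subst hQ'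
  refine ⟨?_, ?_, ?_, ?_, ?_, ?_, ?_, ?_, ?_⟩
  · have e : G₁₂ * (Lt * Λ * L) * G₂₁ = (G₁₂ * Lt) * Λ * (L * G₂₁) := by
      simp only [Matrix.mul_assoc]
    rw [e]; exact stable_sandwich hΛ _ _ sG12Lt sLG21
  · have e : G₁₂ * (Lt * Λ * L) * G₂₂ = (G₁₂ * Lt) * Λ * (L * G₂₂) := by
      simp only [Matrix.mul_assoc]
    rw [e]; exact stable_sandwich hΛ _ _ sG12Lt sLG22
  · have e : G₁₂ * (Lt * Λ * L) = (G₁₂ * Lt) * Λ * L := by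
      simp only [Matrix.mul_assoc]
    rw [e]; exact stable_sandwich hΛ _ _ sG12Lt sL
  · have e : (Lt * Λ * L) * G₂₁ = Lt * Λ * (L * G₂₁) := by
      simp only [Matrix.mul_assoc]
    rw [e]; exact stable_sandwich hΛ _ _ sLt sLG21
  · have e : (Lt * Λ * L) * G₂₂ = Lt * Λ * (L * G₂₂) := by
      simp only [Matrix.mul_assoc]
    rw [e]; exact stable_sandwich hΛ _ _ sLt sLG22
  · exact stable_sandwich hΛ _ _ sLt sL
  · have e : G₂₂ * (Lt * Λ * L) * G₂₁ = (G₂₂ * Lt) * Λ * (L * G₂₁) := by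
      simp only [Matrix.mul_assoc]
    rw [e]; exact stable_sandwich hΛ _ _ sG22Lt sLG21
  · have e : G₂₂ * (Lt * Λ * L) * G₂₂ = (G₂₂ * Lt) * Λ * (L * G₂₂) := by
      simp only [Matrix.mul_assoc]
    rw [e]; exact stable_sandwich hΛ _ _ sG22Lt sLG22
  · have e : G₂₂ * (Lt * Λ * L) = (G₂₂ * Lt) * Λ * L := by
      simp only [Matrix.mul_assoc]
    rw [e]; exact stable_sandwich hΛ _ _ sG22Lt sL
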